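/- Let U ⊂ ℝ^m be a bounded open set and let a, t : U → ℝ^m be continuously differentiable maps whose differentials are bounded on U. For n ∈ ℕ and u ∈ U set Jₙ(u) = Da(u) + n · Dt(u), an m × m real matrix. Then ∫_U √(det(Iₘ + Jₙ(u)ᵀ Jₙ(u))) du = O(n^m) as n → ∞; and if moreover det(Dt(u)) = 0 for every u ∈ U, then ∫_U √(det(Iₘ + Jₙ(u)ᵀ Jₙ(u))) du = O(n^{m−1}). -/

import Mathlib

open MeasureTheory Module Matrix

section Aux

lemma abs_det_le_prod_bound {N : Type*} [Fintype N] [DecidableEq N]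
    (M : Matrix N N ℝ) (b : N → ℝ) (hb : ∀ i j, |M i j| ≤ b j) :
    |M.det| ≤ (Nat.factorial (Fintype.card N)) * ∏ j, b j := by
  rw [Matrix.det_apply]
  refine (Finset.abs_sum_le_sum_abs _ _).trans ?_
  have hterm : ∀ σ : Equiv.Perm N, |Equiv.Perm.sign σ • ∏ i, M (σ i) i| ≤ ∏ j, b j := by
    intro σ
    have h1 : |Equiv.Perm.sign σ • ∏ i, M (σ i) i| = |∏ i, M (σ i) i| := by
      rcases Int.units_eq_one_or (Equiv.Perm.sign σ) with h | h <;>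
        simp [h, Units.smul_def, abs_neg]
    rw [h1, Finset.abs_prod]
    exact Finset.prod_le_prod (fun i _ => abs_nonneg _) (fun i _ => hb (σ i) i)
  refine (Finset.sum_le_sum fun σ _ => hterm σ).trans ?_
  rw [Finset.sum_const, Finset.card_univ, Fintype.card_perm, nsmul_eq_mul]

lemma jacobianMatrix_entry_le' {m : ℕ} (L : (Fin m → ℝ) →L[ℝ] (Fin m → ℝ)) (i j : Fin m) :
    |LinearMap.toMatrix' (L : (Fin m → ℝ) →ₗ[ℝ] (Fin m → ℝ)) i j| ≤ ‖L‖ := by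
  rw [LinearMap.toMatrix'_apply]
  have h1 : (fun j' => if j' = j then (1:ℝ) else 0) = Pi.single j 1 := by
    funext j'; simp [Pi.single_apply]
  rw [ContinuousLinearMap.coe_coe]
  have h2 : |(L (Pi.single j 1)) i| ≤ ‖L (Pi.single j 1)‖ := by
    rw [← Real.norm_eq_abs]; exact norm_le_pi_norm (f := L (Pi.single j 1)) i
  refine h2.trans ?_
  have h3 : ‖(Pi.single j (1:ℝ) : Fin m → ℝ)‖ ≤ 1 := by
    refine (pi_norm_le_iff_of_nonneg zero_le_one).2 fun k => ?_
    rcases eq_or_ne k j with rfl | h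
    · simp
    · simp [Pi.single_eq_of_ne h]
  calc ‖L (Pi.single j 1)‖ ≤ ‖L‖ * ‖(Pi.single j (1:ℝ) : Fin m → ℝ)‖ := L.le_opNorm _
    _ ≤ ‖L‖ * 1 := mul_le_mul_of_nonneg_left h3 (norm_nonneg L)
    _ = ‖L‖ := mul_one _

section Pointwise

variable {m n : ℕ} {A B : Matrix (Fin m) (Fin m) ℝ} {M₁ : ℝ}

lemma entryP_bound (hn : 1 ≤ n) (hM : 1 ≤ M₁)
    (hA : ∀ i j, |A i j| ≤ M₁) (hB : ∀ i j, |B i j| ≤ M₁) :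
    ∀ i j, |Matrix.fromBlocks (1 : Matrix (Fin m) (Fin m) ℝ) (-(A + (n:ℝ) • B)ᵀ)
        (A + (n:ℝ) • B) (1 : Matrix (Fin m) (Fin m) ℝ) i j| ≤ 2 * M₁ * n := by
  have hn' : (1:ℝ) ≤ (n:ℝ) := by exact_mod_cast hn
  have hone : ∀ i j : Fin m, |(1 : Matrix (Fin m) (Fin m) ℝ) i j| ≤ 2 * M₁ * n := by
    intro i j
    rcases eq_or_ne i j with rfl | h
    · simp [Matrix.one_apply]; nlinarith
    · simp [Matrix.one_apply_ne h]; nlinarith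
  have hJ : ∀ i j : Fin m, |(A + (n:ℝ) • B) i j| ≤ 2 * M₁ * n := by
    intro i j
    have : |A i j + (n:ℝ) * B i j| ≤ M₁ + (n:ℝ) * M₁ := by
      refine (abs_add_le _ _).trans ?_
      have := hB i j
      have := hA i j
      have : |(n:ℝ) * B i j| ≤ (n:ℝ) * M₁ := by
        rw [abs_mul, abs_of_nonneg (by positivity : (0:ℝ) ≤ (n:ℝ))]
        exact mul_le_mul_of_nonneg_left (hB i j) (by positivity)
      linarith [hA i j]
    simpa [Matrix.add_apply, Matrix.smul_apply, smul_eq_mul] using this.trans (by nlinarith)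
  rintro (i | i) (j | j)
  · simpa using hone i j
  · simp only [Matrix.fromBlocks_apply₁₂, Matrix.neg_apply, Matrix.transpose_apply, abs_neg]
    exact hJ j i
  · simpa using hJ i j
  · simpa using hone i j

lemma pointwise1 (hn : 1 ≤ n) (hM : 1 ≤ M₁)
    (hA : ∀ i j, |A i j| ≤ M₁) (hB : ∀ i j, |B i j| ≤ M₁) :
    Real.sqrt ((1 + (A + (n:ℝ) • B)ᵀ * (A + (n:ℝ) • B)).det) ≤
      Real.sqrt ((m + m).factorial) * (2 * M₁ * n) ^ m := by
  set J := A + (n:ℝ) • B with hJdef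
  set P := Matrix.fromBlocks (1 : Matrix (Fin m) (Fin m) ℝ) (-Jᵀ) J
      (1 : Matrix (Fin m) (Fin m) ℝ) with hPdef
  have hdet : (1 + Jᵀ * J).det = P.det := by
    rw [Matrix.det_one_add_mul_comm, hPdef, Matrix.det_fromBlocks_one₁₁, Matrix.mul_neg,
      sub_neg_eq_add]
  have hcard : Fintype.card (Fin m ⊕ Fin m) = m + m := by simp
  have hb := abs_det_le_prod_bound P (fun _ => 2 * M₁ * n)
    (entryP_bound hn hM hA hB)
  rw [Finset.prod_const, Finset.card_univ, hcard] at hb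
  have he : (0:ℝ) ≤ 2 * M₁ * n := by positivity
  have key : (1 + Jᵀ * J).det ≤ ((m+m).factorial : ℝ) * ((2 * M₁ * n) ^ m) ^ 2 := by
    rw [hdet]
    refine (le_abs_self _).trans (hb.trans ?_)
    rw [← pow_mul]
    have : m + m = m * 2 := by ring
    rw [this]
  calc Real.sqrt ((1 + Jᵀ * J).det) ≤
      Real.sqrt (((m+m).factorial : ℝ) * ((2 * M₁ * n) ^ m) ^ 2) := Real.sqrt_le_sqrt key
    _ = Real.sqrt ((m+m).factorial) * (2 * M₁ * n) ^ m := by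
        rw [Real.sqrt_mul (by positivity), Real.sqrt_sq (by positivity)]



variable {m n : ℕ} {A B : Matrix (Fin m) (Fin m) ℝ} {M₁ : ℝ}

set_option maxHeartbeats 1000000 in
lemma pointwise2 (hm : 0 < m) (hn : 1 ≤ n) (hM : 1 ≤ M₁)
    (hA : ∀ i j, |A i j| ≤ M₁) (hB : ∀ i j, |B i j| ≤ M₁) (hdetB : B.det = 0) :
    Real.sqrt ((1 + (A + (n:ℝ) • B)ᵀ * (A + (n:ℝ) • B)).det) ≤
      Real.sqrt ((m + m).factorial) * ((m : ℝ) * M₁ + 1) * (2 * M₁ * n) ^ (m - 1) := by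
  have hM0 : (0:ℝ) ≤ M₁ := by linarith
  -- kernel vectors
  obtain ⟨v, hv0, hBv⟩ := Matrix.exists_mulVec_eq_zero_iff.mpr hdetB
  have hdetBT : Bᵀ.det = 0 := by rw [Matrix.det_transpose]; exact hdetB
  obtain ⟨w, hw0, hBw⟩ := Matrix.exists_mulVec_eq_zero_iff.mpr hdetBT
  -- normalize v
  have huniv : (Finset.univ : Finset (Fin m)).Nonempty := ⟨⟨0, hm⟩, Finset.mem_univ _⟩
  obtain ⟨k, -, hk⟩ := Finset.exists_max_image Finset.univ (fun i => |v i|) huniv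
  have hvk : v k ≠ 0 := by
    intro h
    apply hv0; funext i
    have h2 := hk i (Finset.mem_univ i)
    rw [h, abs_zero] at h2
    exact abs_eq_zero.mp (le_antisymm h2 (abs_nonneg _))
  set v' : Fin m → ℝ := (v k)⁻¹ • v with hv'def
  have hv'k : v' k = 1 := by simp [hv'def, inv_mul_cancel₀ hvk]
  have hv'le : ∀ i, |v' i| ≤ 1 := by
    intro i
    rw [hv'def, Pi.smul_apply, smul_eq_mul, abs_mul, abs_inv,
      inv_mul_le_iff₀ (abs_pos.mpr hvk), mul_one]
    exact hk i (Finset.mem_univ i)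
  have hBv' : B *ᵥ v' = 0 := by rw [hv'def, Matrix.mulVec_smul, hBv, smul_zero]
  -- normalize w
  obtain ⟨l, -, hl⟩ := Finset.exists_max_image Finset.univ (fun i => |w i|) huniv
  have hwl : w l ≠ 0 := by
    intro h
    apply hw0; funext i
    have h2 := hl i (Finset.mem_univ i)
    rw [h, abs_zero] at h2
    exact abs_eq_zero.mp (le_antisymm h2 (abs_nonneg _))
  set w' : Fin m → ℝ := (w l)⁻¹ • w with hw'def
  have hw'l : w' l = 1 := by simp [hw'def, inv_mul_cancel₀ hwl]
  have hw'le : ∀ i, |w' i| ≤ 1 := by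
    intro i
    rw [hw'def, Pi.smul_apply, smul_eq_mul, abs_mul, abs_inv,
      inv_mul_le_iff₀ (abs_pos.mpr hwl), mul_one]
    exact hl i (Finset.mem_univ i)
  have hBw' : Bᵀ *ᵥ w' = 0 := by rw [hw'def, Matrix.mulVec_smul, hBw, smul_zero]
  -- the block matrix
  set J := A + (n:ℝ) • B with hJdef
  set P := Matrix.fromBlocks (1 : Matrix (Fin m) (Fin m) ℝ) (-Jᵀ) J
      (1 : Matrix (Fin m) (Fin m) ℝ) with hPdef
  have hdet : (1 + Jᵀ * J).det = P.det := by
    rw [Matrix.det_one_add_mul_comm, hPdef, Matrix.det_fromBlocks_one₁₁, Matrix.mul_neg,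
      sub_neg_eq_add]
  set vcol : Fin m ⊕ Fin m → ℝ := Sum.elim v' 0 with hvcol
  set wcol : Fin m ⊕ Fin m → ℝ := Sum.elim 0 w' with hwcol
  set P1 := P.updateCol (Sum.inl k) (fun r => ∑ j, vcol j • P r j) with hP1
  set Q := P1.updateCol (Sum.inr l) (fun r => ∑ j, wcol j • P1 r j) with hQ
  have hdP1 : P1.det = P.det := by
    rw [hP1, Matrix.det_updateCol_sum]
    simp [hvcol, hv'k]
  have hdQ : Q.det = P.det := by
    rw [hQ, Matrix.det_updateCol_sum, hdP1]
    simp [hwcol, hw'l]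
  -- sums over kernel vectors
  have hsumv : ∀ i, ∑ j, v' j • J i j = ∑ j, v' j * A i j := by
    intro i
    have h0 : ∑ j, B i j * v' j = 0 := by
      simpa [Matrix.mulVec, dotProduct] using congrFun hBv' i
    have hterm : ∀ j, v' j • J i j = v' j * A i j + (n:ℝ) * (B i j * v' j) := by
      intro j
      simp only [hJdef, Matrix.add_apply, Matrix.smul_apply, smul_eq_mul]
      ring
    rw [Finset.sum_congr rfl (fun j _ => hterm j), Finset.sum_add_distrib, ← Finset.mul_sum,
      h0, mul_zero, add_zero]
  have hsumw : ∀ i, ∑ j, w' j • (-(J j i)) = -(∑ j, w' j * A j i) := by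
    intro i
    have h0 : ∑ j, B j i * w' j = 0 := by
      simpa [Matrix.mulVec, dotProduct, Matrix.transpose_apply] using congrFun hBw' i
    have hterm : ∀ j, w' j • (-(J j i)) = -(w' j * A j i) + (-(n:ℝ)) * (B j i * w' j) := by
      intro j
      simp only [hJdef, Matrix.add_apply, Matrix.smul_apply, smul_eq_mul]
      ring
    rw [Finset.sum_congr rfl (fun j _ => hterm j), Finset.sum_add_distrib, ← Finset.mul_sum,
      h0, mul_zero, add_zero, ← Finset.sum_neg_distrib]
  -- generic bound for such sums
  have habs : ∀ (x : Fin m → ℝ) (f : Fin m → ℝ), (∀ i, |x i| ≤ 1) → (∀ i, |f i| ≤ M₁) →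
      |∑ j, x j * f j| ≤ (m:ℝ) * M₁ := by
    intro x f hx hf
    refine (Finset.abs_sum_le_sum_abs _ _).trans ?_
    have h1 : ∀ j ∈ Finset.univ, |x j * f j| ≤ M₁ := by
      intro j _
      rw [abs_mul]
      nlinarith [hx j, hf j, abs_nonneg (x j), abs_nonneg (f j)]
    refine (Finset.sum_le_sum h1).trans ?_
    rw [Finset.sum_const, Finset.card_univ, Fintype.card_fin, nsmul_eq_mul]
  -- entry bounds for Q
  set c : ℝ := (m:ℝ) * M₁ + 1 with hcdef
  set e : ℝ := 2 * M₁ * n with hedef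
  have hc0 : (0:ℝ) ≤ c := by
    have : (0:ℝ) ≤ (m:ℝ) * M₁ := mul_nonneg (Nat.cast_nonneg _) hM0
    linarith
  have he0 : (0:ℝ) ≤ e := by
    have : (0:ℝ) ≤ (n:ℝ) := Nat.cast_nonneg _
    nlinarith
  set b : Fin m ⊕ Fin m → ℝ := fun j => if j = Sum.inl k ∨ j = Sum.inr l then c else e
    with hbdef
  -- column inl k of Q
  have hQcol1 : ∀ r, Q r (Sum.inl k) = ∑ j, vcol j • P r j := by
    intro r
    rw [hQ, Matrix.updateCol_ne (by simp : (Sum.inl k : Fin m ⊕ Fin m) ≠ Sum.inr l),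
      hP1, Matrix.updateCol_self]
  have hQcol2 : ∀ r, Q r (Sum.inr l) = ∑ j, wcol j • P r j := by
    intro r
    rw [hQ, Matrix.updateCol_self]
    refine Finset.sum_congr rfl fun j _ => ?_
    rcases j with j' | j'
    · simp [hwcol]
    · rw [hP1, Matrix.updateCol_ne (by simp : (Sum.inr j' : Fin m ⊕ Fin m) ≠ Sum.inl k)]
  have hval1 : ∀ r, |∑ j, vcol j • P r j| ≤ c := by
    rintro (i | i)
    · have : ∑ j, vcol j • P (Sum.inl i) j = v' i := by
        rw [Fintype.sum_sum_type]
        simp [hvcol, hPdef, Matrix.one_apply, mul_ite]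
      rw [this]
      have := hv'le i
      rw [hcdef]
      have : (0:ℝ) ≤ (m:ℝ) * M₁ := mul_nonneg (Nat.cast_nonneg _) hM0
      linarith [hv'le i]
    · have h1 : ∑ j, vcol j • P (Sum.inr i) j = ∑ j, v' j * A i j := by
        rw [Fintype.sum_sum_type]
        have h2 : ∑ j, vcol (Sum.inl j) • P (Sum.inr i) (Sum.inl j) = ∑ j, v' j • J i j := by
          simp [hvcol, hPdef]
        have h3 : ∑ j, vcol (Sum.inr j) • P (Sum.inr i) (Sum.inr j) = 0 := by
          simp [hvcol, hPdef]
        rw [h2, h3, add_zero, hsumv]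
      rw [h1, hcdef]
      have := habs v' (fun j => A i j) hv'le (fun j => hA i j)
      linarith
  have hval2 : ∀ r, |∑ j, wcol j • P r j| ≤ c := by
    rintro (i | i)
    · have h1 : ∑ j, wcol j • P (Sum.inl i) j = -(∑ j, w' j * A j i) := by
        rw [Fintype.sum_sum_type]
        have h2 : ∑ j, wcol (Sum.inl j) • P (Sum.inl i) (Sum.inl j) = 0 := by
          simp [hwcol, hPdef]
        have h3 : ∑ j, wcol (Sum.inr j) • P (Sum.inl i) (Sum.inr j)
            = ∑ j, w' j • (-(J j i)) := by
          simp [hwcol, hPdef, Matrix.transpose_apply]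
        rw [h2, h3, zero_add, hsumw]
      rw [h1, abs_neg, hcdef]
      have := habs w' (fun j => A j i) hw'le (fun j => hA j i)
      linarith
    · have h1 : ∑ j, wcol j • P (Sum.inr i) j = w' i := by
        rw [Fintype.sum_sum_type]
        simp [hwcol, hPdef, Matrix.one_apply, mul_ite]
      rw [h1, hcdef]
      have : (0:ℝ) ≤ (m:ℝ) * M₁ := mul_nonneg (Nat.cast_nonneg _) hM0
      linarith [hw'le i]
  have hQb : ∀ r j, |Q r j| ≤ b j := by
    intro r j
    by_cases h1 : j = Sum.inl k
    · subst h1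
      have hb1 : b (Sum.inl k) = c := by simp [hbdef]
      rw [hb1, hQcol1]
      exact hval1 r
    · by_cases h2 : j = Sum.inr l
      · subst h2
        have hb2 : b (Sum.inr l) = c := by simp [hbdef]
        rw [hb2, hQcol2]
        exact hval2 r
      · have hb3 : b j = e := by
          simp only [hbdef]
          exact if_neg (by tauto)
        have hQP : Q r j = P r j := by
          rw [hQ, Matrix.updateCol_ne h2, hP1, Matrix.updateCol_ne h1]
        rw [hb3, hQP, hedef]
        exact entryP_bound hn hM hA hB r j
  -- product of bounds
  have hne : (Sum.inl k : Fin m ⊕ Fin m) ≠ Sum.inr l := by simp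
  have hsub : ({Sum.inl k, Sum.inr l} : Finset (Fin m ⊕ Fin m)) ⊆ Finset.univ :=
    Finset.subset_univ _
  have hprod : ∏ j, b j = c * c * e ^ (m + m - 2) := by
    rw [← Finset.prod_sdiff hsub]
    have h1 : ∏ j ∈ ({Sum.inl k, Sum.inr l} : Finset (Fin m ⊕ Fin m)), b j = c * c := by
      rw [Finset.prod_pair hne]
      simp [hbdef]
    have h2 : ∏ j ∈ Finset.univ \ ({Sum.inl k, Sum.inr l} : Finset (Fin m ⊕ Fin m)), b j
        = e ^ (m + m - 2) := by
      have hbj : ∀ j ∈ Finset.univ \ ({Sum.inl k, Sum.inr l} : Finset (Fin m ⊕ Fin m)),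
          b j = e := by
        intro j hj
        simp only [Finset.mem_sdiff, Finset.mem_insert, Finset.mem_singleton, not_or] at hj
        simp only [hbdef]
        exact if_neg (by tauto)
      rw [Finset.prod_congr rfl hbj, Finset.prod_const]
      congr 1
      rw [Finset.card_sdiff_of_subset hsub, Finset.card_pair hne, Finset.card_univ]
      simp
    rw [h1, h2]
    ring
  have hcard : Fintype.card (Fin m ⊕ Fin m) = m + m := by simp
  have hbound := abs_det_le_prod_bound Q b hQb
  rw [hprod, hcard] at hbound
  -- final computation
  have hmm : m + m - 2 = (m - 1) + (m - 1) := by omega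
  have hkey : (1 + Jᵀ * J).det ≤
      ((m+m).factorial : ℝ) * (c * c * (e ^ (m-1) * e ^ (m-1))) := by
    rw [hdet, ← hdQ]
    refine (le_abs_self _).trans (hbound.trans ?_)
    rw [hmm, pow_add]
  have hfac : (0:ℝ) ≤ ((m+m).factorial : ℝ) := Nat.cast_nonneg _
  have hrw : ((m+m).factorial : ℝ) * (c * c * (e ^ (m-1) * e ^ (m-1)))
      = (Real.sqrt ((m+m).factorial) * c * e ^ (m-1)) ^ 2 := by
    have h := Real.mul_self_sqrt hfac
    calc ((m+m).factorial : ℝ) * (c * c * (e ^ (m-1) * e ^ (m-1)))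
        = (Real.sqrt ((m+m).factorial) * Real.sqrt ((m+m).factorial))
            * (c * c * (e ^ (m-1) * e ^ (m-1))) := by rw [h]
      _ = (Real.sqrt ((m+m).factorial) * c * e ^ (m-1)) ^ 2 := by ring
  calc Real.sqrt ((1 + Jᵀ * J).det)
      ≤ Real.sqrt ((Real.sqrt ((m+m).factorial) * c * e ^ (m-1)) ^ 2) := by
        refine Real.sqrt_le_sqrt ?_
        rw [← hrw]; exact hkey
    _ = Real.sqrt ((m+m).factorial) * c * e ^ (m-1) := by
        refine Real.sqrt_sq ?_
        have h1 : (0:ℝ) ≤ Real.sqrt ((m+m).factorial) := Real.sqrt_nonneg _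
        have h2 : (0:ℝ) ≤ e ^ (m-1) := pow_nonneg he0 _
        positivity

end Pointwise

end Aux

/-- The Jacobian matrix of a map `f : ℝ^m → ℝ^m` at a point `u`. -/
noncomputable def jacobianMatrix {m : ℕ} (f : (Fin m → ℝ) → (Fin m → ℝ))
    (u : Fin m → ℝ) : Matrix (Fin m) (Fin m) ℝ :=
  LinearMap.toMatrix' (fderiv ℝ f u : (Fin m → ℝ) →ₗ[ℝ] (Fin m → ℝ))

lemma jacobianMatrix_entry_le {m : ℕ} (f : (Fin m → ℝ) → (Fin m → ℝ)) (u : Fin m → ℝ)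
    (i j : Fin m) : |jacobianMatrix f u i j| ≤ ‖fderiv ℝ f u‖ :=
  jacobianMatrix_entry_le' (fderiv ℝ f u) i j

/-- Let `U ⊂ ℝ^m` be a bounded open set, `a, t : U → ℝ^m` maps of class
`C¹` with bounded differentials on `U`, and set `Jₙ(u) = Da(u) + n·Dt(u)`.  Then the graph
volume `∫_U √(det(Iₘ + Jₙᵀ Jₙ))` is `O(n^m)`; if moreover `det(Dt(u)) = 0` for all `u ∈ U`
(the translation vector does not have maximal variation), it is `O(n^{m-1})`. -/
theorem graph_volume_growth
    {m : ℕ} (U : Set (Fin m → ℝ)) (hUopen : IsOpen U) (hUbdd : Bornology.IsBounded U)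
    (a t : (Fin m → ℝ) → (Fin m → ℝ))
    (ha : ContDiffOn ℝ 1 a U) (ht : ContDiffOn ℝ 1 t U)
    (hbdd : ∃ M : ℝ, ∀ u ∈ U, ‖fderiv ℝ a u‖ ≤ M ∧ ‖fderiv ℝ t u‖ ≤ M) :
    (∃ C : ℝ, 0 < C ∧ ∀ n : ℕ, 1 ≤ n →
      (∫ u in U, Real.sqrt
          ((1 + (jacobianMatrix a u + (n : ℝ) • jacobianMatrix t u)ᵀ *
            (jacobianMatrix a u + (n : ℝ) • jacobianMatrix t u)).det))
        ≤ C * (n : ℝ) ^ m) ∧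
    ((∀ u ∈ U, (jacobianMatrix t u).det = 0) →
      ∃ C : ℝ, 0 < C ∧ ∀ n : ℕ, 1 ≤ n →
        (∫ u in U, Real.sqrt
            ((1 + (jacobianMatrix a u + (n : ℝ) • jacobianMatrix t u)ᵀ *
              (jacobianMatrix a u + (n : ℝ) • jacobianMatrix t u)).det))
          ≤ C * (n : ℝ) ^ (m - 1)) := by
  obtain ⟨M, hM⟩ := hbdd
  set M₁ : ℝ := max M 1 with hM₁def
  have hM₁ : 1 ≤ M₁ := le_max_right _ _
  have hM₁0 : 0 ≤ M₁ := by linarith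
  have hAb : ∀ u ∈ U, ∀ i j, |jacobianMatrix a u i j| ≤ M₁ := fun u hu i j =>
    (jacobianMatrix_entry_le a u i j).trans ((hM u hu).1.trans (le_max_left _ _))
  have hBb : ∀ u ∈ U, ∀ i j, |jacobianMatrix t u i j| ≤ M₁ := fun u hu i j =>
    (jacobianMatrix_entry_le t u i j).trans ((hM u hu).2.trans (le_max_left _ _))
  have hvolfin : MeasureTheory.volume U < ⊤ := hUbdd.measure_lt_top
  set V : ℝ := (MeasureTheory.volume U).toReal with hVdef
  have hV0 : 0 ≤ V := ENNReal.toReal_nonneg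
  have hint : ∀ (n : ℕ) (D : ℝ), 0 ≤ D →
      (∀ u ∈ U, Real.sqrt
          ((1 + (jacobianMatrix a u + (n : ℝ) • jacobianMatrix t u)ᵀ *
            (jacobianMatrix a u + (n : ℝ) • jacobianMatrix t u)).det) ≤ D) →
      (∫ u in U, Real.sqrt
          ((1 + (jacobianMatrix a u + (n : ℝ) • jacobianMatrix t u)ᵀ *
            (jacobianMatrix a u + (n : ℝ) • jacobianMatrix t u)).det)) ≤ D * V := by
    intro n D hD0 hptw
    refine (le_abs_self _).trans ?_
    rw [← Real.norm_eq_abs]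
    refine norm_setIntegral_le_of_norm_le_const_ae' hvolfin ?_
    filter_upwards with u hu
    rw [Real.norm_eq_abs, abs_of_nonneg (Real.sqrt_nonneg _)]
    exact hptw u hu
  constructor
  · -- O(n^m)
    set K : ℝ := Real.sqrt ((m + m).factorial) * (2 * M₁) ^ m with hKdef
    have hK0 : 0 ≤ K := by positivity
    refine ⟨K * V + 1, by positivity, fun n hn => ?_⟩
    have hptw : ∀ u ∈ U, Real.sqrt
        ((1 + (jacobianMatrix a u + (n : ℝ) • jacobianMatrix t u)ᵀ *
          (jacobianMatrix a u + (n : ℝ) • jacobianMatrix t u)).det) ≤ K * (n:ℝ) ^ m := by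
      intro u hu
      refine (pointwise1 hn hM₁ (hAb u hu) (hBb u hu)).trans (le_of_eq ?_)
      rw [hKdef]; ring
    have hnm1 : (1:ℝ) ≤ (n:ℝ) ^ m := one_le_pow₀ (by exact_mod_cast hn)
    have hnm0 : (0:ℝ) ≤ (n:ℝ) ^ m := by linarith
    calc (∫ u in U, Real.sqrt
          ((1 + (jacobianMatrix a u + (n : ℝ) • jacobianMatrix t u)ᵀ *
            (jacobianMatrix a u + (n : ℝ) • jacobianMatrix t u)).det))
        ≤ (K * (n:ℝ) ^ m) * V := hint n _ (by positivity) hptw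
      _ = (K * V) * (n:ℝ) ^ m := by ring
      _ ≤ (K * V + 1) * (n:ℝ) ^ m := by nlinarith
  · -- O(n^(m-1))
    intro hdet
    set K : ℝ := Real.sqrt ((m + m).factorial) * ((m : ℝ) * M₁ + 1) * (2 * M₁) ^ (m - 1)
      with hKdef
    have hK0 : 0 ≤ K := by positivity
    refine ⟨K * V + 1, by positivity, fun n hn => ?_⟩
    have hptw : ∀ u ∈ U, Real.sqrt
        ((1 + (jacobianMatrix a u + (n : ℝ) • jacobianMatrix t u)ᵀ *
          (jacobianMatrix a u + (n : ℝ) • jacobianMatrix t u)).det) ≤ K * (n:ℝ) ^ (m-1) := by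
      intro u hu
      rcases Nat.eq_zero_or_pos m with hm | hm
      · exfalso
        have h1 := hdet u hu
        have : IsEmpty (Fin m) := by rw [hm]; infer_instance
        rw [Matrix.det_isEmpty] at h1
        exact one_ne_zero h1
      · refine (pointwise2 hm hn hM₁ (hAb u hu) (hBb u hu) (hdet u hu)).trans (le_of_eq ?_)
        rw [hKdef]; ring
    have hnm1 : (1:ℝ) ≤ (n:ℝ) ^ (m-1) := one_le_pow₀ (by exact_mod_cast hn)
    have hnm0 : (0:ℝ) ≤ (n:ℝ) ^ (m-1) := by linarith
    calc (∫ u in U, Real.sqrt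
          ((1 + (jacobianMatrix a u + (n : ℝ) • jacobianMatrix t u)ᵀ *
            (jacobianMatrix a u + (n : ℝ) • jacobianMatrix t u)).det))
        ≤ (K * (n:ℝ) ^ (m-1)) * V := hint n _ (by positivity) hptw
      _ = (K * V) * (n:ℝ) ^ (m-1) := by ring
      _ ≤ (K * V + 1) * (n:ℝ) ^ (m-1) := by nlinarith
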